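/- For x > 0, the trigamma function satisfies ψ'(x) > 1/(x+1) + 1/x² + 1/(2(x+1)²). -/

import Mathlib

open Real Filter

/-- The trigamma function ψ'(x) = Σ_{k=0}^∞ 1/(k+x)². -/
noncomputable def trigamma (x : ℝ) : ℝ := ∑' k : ℕ, 1 / ((k : ℝ) + x) ^ 2

lemma summable_aux {y : ℝ} (hy : 0 < y) :
    Summable (fun k : ℕ => 1 / ((k : ℝ) + y) ^ 2) := by
  set c := min y 1 with hc
  have hc0 : 0 < c := lt_min hy one_pos
  have hS : Summable (fun k : ℕ => (1 / c ^ 2) * (1 / ((k : ℝ) + 1) ^ 2)) := by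
    apply Summable.mul_left
    have := (summable_nat_add_iff (f := fun n : ℕ => 1 / (n : ℝ) ^ 2) 1).mpr
      (Real.summable_one_div_nat_pow.mpr one_lt_two)
    convert this using 2 with k
    push_cast
    · rfl
    · push_cast; ring
  apply Summable.of_nonneg_of_le (fun k => by positivity) _ hS
  intro k
  have hknn : (0:ℝ) ≤ (k : ℝ) := Nat.cast_nonneg k
  have hk : c * ((k : ℝ) + 1) ≤ (k : ℝ) + y := by
    rcases le_total y 1 with h | h
    · have hcy : c = y := min_eq_left h
      rw [hcy]; nlinarith
    · have hcy : c = 1 := min_eq_right h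
      rw [hcy]; nlinarith
  have h1 : 0 < c * ((k : ℝ) + 1) := by positivity
  have hsq : (c * ((k:ℝ)+1)) ^ 2 ≤ ((k:ℝ) + y) ^ 2 := by nlinarith
  calc 1 / ((k : ℝ) + y) ^ 2 ≤ 1 / (c * ((k:ℝ)+1)) ^ 2 :=
        one_div_le_one_div_of_le (by positivity) hsq
    _ = (1 / c ^ 2) * (1 / ((k : ℝ) + 1) ^ 2) := by
        rw [mul_pow]; field_simp

lemma trigamma_lb {y : ℝ} (hy : 0 < y) :
    trigamma y > 1 / y + 1 / (2 * y ^ 2) := by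
  set F : ℕ → ℝ := fun k => 1 / ((k : ℝ) + y) + 1 / (2 * ((k : ℝ) + y) ^ 2) with hF
  set g : ℕ → ℝ := fun k => F k - F (k + 1) with hg
  have hpos : ∀ k : ℕ, (0:ℝ) < (k : ℝ) + y := fun k => by positivity
  have key : ∀ k : ℕ, g k
      = 1 / ((k : ℝ) + y) ^ 2 - 1 / (2 * ((k : ℝ) + y) ^ 2 * ((k : ℝ) + 1 + y) ^ 2) := by
    intro k
    have t0 : (0:ℝ) < (k : ℝ) + y := hpos k
    have t1 : (0:ℝ) < (k : ℝ) + 1 + y := by positivity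
    simp only [hg, hF]
    push_cast
    field_simp
    ring
  have hcorr : ∀ k : ℕ, 0 < 1 / (2 * ((k : ℝ) + y) ^ 2 * ((k : ℝ) + 1 + y) ^ 2) := by
    intro k
    have t0 : (0:ℝ) < (k : ℝ) + y := hpos k
    positivity
  have hlt : ∀ k : ℕ, g k < 1 / ((k : ℝ) + y) ^ 2 := by
    intro k; rw [key k]; linarith [hcorr k]
  have hgnn : ∀ k : ℕ, 0 ≤ g k := by
    intro k
    rw [key k]
    have t0 : (0:ℝ) < (k : ℝ) + y := hpos k
    have t1 : (1:ℝ) ≤ (k : ℝ) + 1 + y := by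
      have : (0:ℝ) ≤ (k:ℝ) := Nat.cast_nonneg k
      linarith
    have hle : ((k:ℝ) + y) ^ 2 ≤ 2 * ((k : ℝ) + y) ^ 2 * ((k : ℝ) + 1 + y) ^ 2 := by
      nlinarith [sq_nonneg ((k:ℝ)+y)]
    have := one_div_le_one_div_of_le (by positivity) hle
    linarith
  have hsum : Summable (fun k : ℕ => 1 / ((k : ℝ) + y) ^ 2) := summable_aux hy
  have hgsum : Summable g :=
    Summable.of_nonneg_of_le hgnn (fun k => (hlt k).le) hsum
  have hFlim : Tendsto F atTop (nhds 0) := by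
    have h1 : Tendsto (fun k : ℕ => (k : ℝ) + y) atTop atTop :=
      tendsto_atTop_add_const_right _ _ tendsto_natCast_atTop_atTop
    have h2 : Tendsto (fun k : ℕ => 1 / ((k : ℝ) + y)) atTop (nhds 0) :=
      Tendsto.comp tendsto_inv_atTop_zero h1 |>.congr (fun k => by simp [one_div])
    have h3 : Tendsto (fun k : ℕ => 2 * ((k : ℝ) + y) ^ 2) atTop atTop := by
      apply Tendsto.const_mul_atTop two_pos
      exact (tendsto_pow_atTop two_ne_zero).comp h1
    have h4 : Tendsto (fun k : ℕ => 1 / (2 * ((k : ℝ) + y) ^ 2)) atTop (nhds 0) :=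
      Tendsto.comp tendsto_inv_atTop_zero h3 |>.congr (fun k => by simp [one_div])
    have h5 := h2.add h4
    rw [add_zero] at h5
    exact h5
  have htel : HasSum g (F 0) := by
    rw [hgsum.hasSum_iff_tendsto_nat]
    have hr : ∀ n, ∑ i ∈ Finset.range n, g i = F 0 - F n := by
      intro n; exact Finset.sum_range_sub' F n
    simp_rw [hr]
    simpa using tendsto_const_nhds.sub hFlim
  have hmain : trigamma y > F 0 := by
    rw [← htel.tsum_eq]
    exact Summable.tsum_lt_tsum (fun k => (hlt k).le) (hlt 0) hgsum hsum
  have hF0 : F 0 = 1 / y + 1 / (2 * y ^ 2) := by simp [hF]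
  rw [hF0] at hmain
  exact hmain

theorem stmt_13 (x : ℝ) (hx : 0 < x) :
    trigamma x > 1 / (x + 1) + 1 / x ^ 2 + 1 / (2 * (x + 1) ^ 2) := by
  have hsplit : trigamma x = 1 / x ^ 2 + trigamma (x + 1) := by
    unfold trigamma
    rw [Summable.tsum_eq_zero_add (summable_aux hx)]
    congr 1
    · norm_num
    · apply tsum_congr; intro k; push_cast; ring_nf
  have := trigamma_lb (by linarith : (0:ℝ) < x + 1)
  rw [hsplit]
  linarith
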